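/- arXiv:2401.11962 — 2 statements merged into one kernel-verified Lean document; each statement's English description precedes it below -/
import Mathlib

section
/- Let H, R > 0 with H·R² ≤ π²/4 and ε > 0. Let K₁, K₂ : (0, R] → ℝ be continuous with |K_i(x)| ≤ H and |K₁(x) − K₂(x)| ≤ ε for all x. For i = 1, 2 let G_i : (0, R] → ℝ be a C² solution of G_i″ + K_i·G_i = 0 with G_i(r) → 0 and G_i(r)/r → 1 as r → 0⁺. Then G₁ and G₂ are positive on (0, R] and |log(G₁(r)/G₂(r))| ≤ C·ε·r² for all r ∈ (0, R], where C is a universal constant. -/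
open Set Filter MeasureTheory intervalIntegral Topology

lemma abs_intInt_le {a b : ℝ} {f g : ℝ → ℝ} (hab : a ≤ b)
    (hf : IntervalIntegrable f volume a b) (hg : IntervalIntegrable g volume a b)
    (h : ∀ x ∈ Icc a b, |f x| ≤ g x) :
    |∫ x in a..b, f x| ≤ ∫ x in a..b, g x :=
  (abs_integral_le_integral_abs hab).trans (integral_mono_on hab hf.abs hg h)

lemma continuousOn_extend {R c : ℝ} (hR : 0 < R) {g : ℝ → ℝ}
    (hg : ContinuousOn g (Ioc 0 R)) (h0 : Tendsto g (𝓝[>] (0:ℝ)) (𝓝 c)) :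
    ContinuousOn (fun t => if t = 0 then c else g t) (Icc 0 R) := by
  intro x hx
  rcases eq_or_ne x 0 with rfl | hx0
  · have hIcc : Icc (0:ℝ) R = Ioc 0 R ∪ {0} := (Ioc_union_left hR.le).symm
    rw [ContinuousWithinAt, if_pos rfl, hIcc, nhdsWithin_union, nhdsWithin_singleton]
    refine Filter.Tendsto.sup ?_ ?_
    · refine ((h0.mono_left (nhdsWithin_mono _ Ioc_subset_Ioi_self)).congr' ?_)
      filter_upwards [eventually_mem_nhdsWithin] with t ht
      exact (if_neg (ne_of_gt ht.1)).symm
    · have := tendsto_pure_nhds (fun t : ℝ => if t = 0 then c else g t) 0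
      simpa using this
  · have hxpos : 0 < x := lt_of_le_of_ne hx.1 (Ne.symm hx0)
    have hmem : Ioc (0:ℝ) R ∈ 𝓝[Icc 0 R] x :=
      mem_nhdsWithin.mpr ⟨Ioi 0, isOpen_Ioi, hxpos, fun t ht => ⟨ht.1, ht.2.2⟩⟩
    have h1 : ContinuousWithinAt g (Icc 0 R) x :=
      (hg x ⟨hxpos, hx.2⟩).mono_of_mem_nhdsWithin hmem
    refine h1.congr_of_eventuallyEq ?_ (if_neg hx0)
    have : {t : ℝ | t ≠ 0} ∈ 𝓝[Icc 0 R] x :=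
      mem_nhdsWithin_of_mem_nhds (compl_singleton_mem_nhds hx0)
    filter_upwards [this] with t ht
    exact if_neg ht


lemma squeeze_abs {α : Type*} {l : Filter α} {f g : α → ℝ}
    (h : ∀ᶠ t in l, |f t| ≤ g t) (hg : Tendsto g l (𝓝 0)) : Tendsto f l (𝓝 0) := by
  rw [tendsto_zero_iff_abs_tendsto_zero]
  exact squeeze_zero' (Eventually.of_forall fun t => abs_nonneg _) h hg

lemma jacobi_aux (H R : ℝ) (K G G' : ℝ → ℝ)
    (hH : 0 < H) (hR : 0 < R) (hHR : H * R ^ 2 ≤ Real.pi ^ 2 / 4)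
    (hK : ContinuousOn K (Ioc 0 R)) (hKb : ∀ x ∈ Ioc (0:ℝ) R, |K x| ≤ H)
    (hG : ∀ x ∈ Ioc (0:ℝ) R, HasDerivWithinAt G (G' x) (Ioc 0 R) x)
    (hG'd : ∀ x ∈ Ioc (0:ℝ) R, HasDerivWithinAt G' (-(K x * G x)) (Ioc 0 R) x)
    (h0 : Tendsto G (𝓝[>] (0:ℝ)) (𝓝 0))
    (h1 : Tendsto (fun r => G r / r) (𝓝[>] (0:ℝ)) (𝓝 1)) :
    (∀ r ∈ Ioc (0:ℝ) R, r / 6 ≤ G r ∧ G r ≤ 2 * r) ∧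
      Tendsto G' (𝓝[>] (0:ℝ)) (𝓝 1) := by
  have hpi2 : Real.pi ^ 2 ≤ 10 := by nlinarith [Real.pi_lt_d2, Real.pi_pos]
  have hGc : ContinuousOn G (Ioc 0 R) := fun x hx => (hG x hx).continuousWithinAt
  have hG'c : ContinuousOn G' (Ioc 0 R) := fun x hx => (hG'd x hx).continuousWithinAt
  -- extended functions
  set f : ℝ → ℝ := fun t => if t = 0 then 0 else K t * G t with hf_def
  set φ : ℝ → ℝ := fun t => if t = 0 then 1 else G t / t with hφ_def
  have hmemIoc : Ioc (0:ℝ) R ∈ 𝓝[>] (0:ℝ) := Ioc_mem_nhdsGT hR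
  have hf0 : Tendsto (fun t => K t * G t) (𝓝[>] (0:ℝ)) (𝓝 0) := by
    apply squeeze_abs (g := fun t => H * |G t|)
    · filter_upwards [hmemIoc] with t ht
      calc |K t * G t| = |K t| * |G t| := abs_mul _ _
        _ ≤ H * |G t| := by
            apply mul_le_mul_of_nonneg_right (hKb t ht) (abs_nonneg _)
    · have : Tendsto (fun t => H * |G t|) (𝓝[>] (0:ℝ)) (𝓝 (H * |(0:ℝ)|)) :=
        (h0.abs.const_mul H)
      simpa using this
  have hfc : ContinuousOn f (Icc 0 R) := continuousOn_extend hR (hK.mul hGc) hf0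
  have hφc : ContinuousOn φ (Icc 0 R) := continuousOn_extend hR
      (hGc.div continuousOn_id (fun x hx => ne_of_gt hx.1)) h1
  -- maximum M of |φ|
  obtain ⟨t₀, ht₀, hmax⟩ := isCompact_Icc.exists_isMaxOn (nonempty_Icc.mpr hR.le)
      (hφc.abs)
  set M := |φ t₀| with hM_def
  have hM1 : 1 ≤ M := by
    have := hmax (mem_Icc.mpr ⟨le_refl (0:ℝ), hR.le⟩)
    simpa [hφ_def] using this
  have hMnonneg : 0 ≤ M := le_trans zero_le_one hM1
  have hφM : ∀ t ∈ Icc (0:ℝ) R, |φ t| ≤ M := fun t ht => hmax ht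
  -- bound on f
  have hfb : ∀ t ∈ Icc (0:ℝ) R, |f t| ≤ H * M * t := by
    intro t ht
    rcases eq_or_ne t 0 with rfl | ht0
    · simp [hf_def]
    · have htpos : 0 < t := lt_of_le_of_ne ht.1 (Ne.symm ht0)
      have htIoc : t ∈ Ioc (0:ℝ) R := ⟨htpos, ht.2⟩
      have hGt : |G t| ≤ M * t := by
        have h2 : |φ t| ≤ M := hφM t ht
        rw [hφ_def] at h2
        simp only [if_neg ht0, abs_div, abs_of_pos htpos] at h2
        calc |G t| = |G t| / t * t := by field_simp
          _ ≤ M * t := mul_le_mul_of_nonneg_right h2 htpos.le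
      calc |f t| = |K t| * |G t| := by rw [hf_def]; simp [if_neg ht0, abs_mul]
        _ ≤ H * (M * t) := mul_le_mul (hKb t htIoc) hGt (abs_nonneg _) hH.le
        _ = H * M * t := by ring
  -- primitives
  set Φ : ℝ → ℝ := fun r => ∫ t in (0:ℝ)..r, f t with hΦ_def
  set Ψ : ℝ → ℝ := fun r => ∫ u in (0:ℝ)..r, Φ u with hΨ_def
  have hIccsub : ∀ {a b : ℝ}, a ∈ Icc (0:ℝ) R → b ∈ Icc (0:ℝ) R → a ≤ b →
      Icc a b ⊆ Icc (0:ℝ) R := fun ha hb _ =>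
    Icc_subset_Icc ha.1 hb.2
  have hfint : ∀ {a b : ℝ}, a ∈ Icc (0:ℝ) R → b ∈ Icc (0:ℝ) R → a ≤ b →
      IntervalIntegrable f volume a b := by
    intro a b ha hb hab
    apply ContinuousOn.intervalIntegrable
    rw [uIcc_of_le hab]
    exact hfc.mono (hIccsub ha hb hab)
  have hΦb : ∀ r ∈ Icc (0:ℝ) R, |Φ r| ≤ H * M * r ^ 2 / 2 := by
    intro r hr
    have h1' : |Φ r| ≤ ∫ t in (0:ℝ)..r, H * M * t := by
      apply abs_intInt_le hr.1 (hfint (left_mem_Icc.mpr hR.le) hr hr.1)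
      · apply ContinuousOn.intervalIntegrable
        fun_prop
      · exact fun x hx => hfb x (hIccsub (left_mem_Icc.mpr hR.le) hr hr.1 hx)
    have h2' : ∫ t in (0:ℝ)..r, H * M * t = H * M * r ^ 2 / 2 := by
      rw [intervalIntegral.integral_const_mul, integral_id]
      ring
    linarith [h1', h2'.le, h2'.ge]
  have hΦc : ContinuousOn Φ (Icc 0 R) := by
    have := intervalIntegral.continuousOn_primitive_interval
      (a := (0:ℝ)) (b := R) (f := f) (μ := volume)
      (by rw [uIcc_of_le hR.le]; exact (hfc.integrableOn_compact isCompact_Icc))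
    rwa [uIcc_of_le hR.le] at this
  have hΦint : ∀ {a b : ℝ}, a ∈ Icc (0:ℝ) R → b ∈ Icc (0:ℝ) R → a ≤ b →
      IntervalIntegrable Φ volume a b := by
    intro a b ha hb hab
    apply ContinuousOn.intervalIntegrable
    rw [uIcc_of_le hab]
    exact hΦc.mono (hIccsub ha hb hab)
  have hΨb : ∀ r ∈ Icc (0:ℝ) R, |Ψ r| ≤ H * M * r ^ 3 / 6 := by
    intro r hr
    have h1' : |Ψ r| ≤ ∫ u in (0:ℝ)..r, H * M * u ^ 2 / 2 := by
      apply abs_intInt_le hr.1 (hΦint (left_mem_Icc.mpr hR.le) hr hr.1)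
      · apply ContinuousOn.intervalIntegrable; fun_prop
      · exact fun x hx => hΦb x (hIccsub (left_mem_Icc.mpr hR.le) hr hr.1 hx)
    have h2' : ∫ u in (0:ℝ)..r, H * M * u ^ 2 / 2 = H * M * r ^ 3 / 6 := by
      have : (fun u : ℝ => H * M * u ^ 2 / 2) = fun u => (H * M / 2) * u ^ 2 := by
        funext u; ring
      rw [this, intervalIntegral.integral_const_mul, integral_pow]
      norm_num; ring
    linarith [h1', h2'.le]
  -- FTC for G' : G' r - G' s = -(Φ r - Φ s)
  have key1 : ∀ s ∈ Ioc (0:ℝ) R, ∀ r ∈ Ioc (0:ℝ) R, s ≤ r →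
      G' r - G' s = -(Φ r - Φ s) := by
    intro s hs r hr hsr
    have hIccS : Icc s r ⊆ Ioc (0:ℝ) R := fun x hx => ⟨hs.1.trans_le hx.1, hx.2.trans hr.2⟩
    have hIccS' : Icc s r ⊆ Icc (0:ℝ) R := fun x hx =>
      ⟨(hs.1.trans_le hx.1).le, hx.2.trans hr.2⟩
    have hftc : ∫ y in s..r, -(f y) = G' r - G' s := by
      apply integral_eq_sub_of_hasDeriv_right_of_le hsr (hG'c.mono hIccS)
      · intro x hx
        have hxS : x ∈ Ioc (0:ℝ) R := hIccS (Ioo_subset_Icc_self hx)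
        have hne : x ≠ 0 := ne_of_gt hxS.1
        have : HasDerivAt G' (-(K x * G x)) x :=
          (hG'd x hxS).hasDerivAt (Ioc_mem_nhds hxS.1 (hx.2.trans_le hr.2))
        have hfx : f x = K x * G x := if_neg hne
        rw [hfx]
        exact this.hasDerivWithinAt
      · apply IntervalIntegrable.neg
        exact hfint (hIccS' (left_mem_Icc.mpr hsr)) (hIccS' (right_mem_Icc.mpr hsr)) hsr
    have hsub : Φ r - Φ s = ∫ y in s..r, f y := by
      rw [hΦ_def]
      exact integral_interval_sub_left
        (hfint (left_mem_Icc.mpr hR.le) ⟨hr.1.le, hr.2⟩ hr.1.le)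
        (hfint (left_mem_Icc.mpr hR.le) ⟨hs.1.le, hs.2⟩ hs.1.le)
    rw [← hftc, hsub, intervalIntegral.integral_neg]
  -- G' s = A - Φ s
  set A := G' R + Φ R with hA_def
  have hG'eq : ∀ s ∈ Ioc (0:ℝ) R, G' s = A - Φ s := by
    intro s hs
    have := key1 s hs R ⟨hR, le_refl R⟩ hs.2
    rw [hA_def]; linarith
  have hΦ0 : Tendsto Φ (𝓝[>] (0:ℝ)) (𝓝 0) := by
    apply squeeze_abs (g := fun s => H * M * s ^ 2 / 2)
    · filter_upwards [hmemIoc] with s hs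
      exact hΦb s ⟨hs.1.le, hs.2⟩
    · have : Continuous (fun s : ℝ => H * M * s ^ 2 / 2) := by fun_prop
      have := (this.tendsto 0).mono_left (nhdsWithin_le_nhds (s := Ioi (0:ℝ)))
      simpa using this
  have hΨ0 : Tendsto Ψ (𝓝[>] (0:ℝ)) (𝓝 0) := by
    apply squeeze_abs (g := fun s => H * M * s ^ 3 / 6)
    · filter_upwards [hmemIoc] with s hs
      exact hΨb s ⟨hs.1.le, hs.2⟩
    · have : Continuous (fun s : ℝ => H * M * s ^ 3 / 6) := by fun_prop
      have := (this.tendsto 0).mono_left (nhdsWithin_le_nhds (s := Ioi (0:ℝ)))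
      simpa using this
  have hG'0 : Tendsto G' (𝓝[>] (0:ℝ)) (𝓝 A) := by
    have h : Tendsto (fun s => A - Φ s) (𝓝[>] (0:ℝ)) (𝓝 A) := by
      have := tendsto_const_nhds (x := A) (f := 𝓝[>] (0:ℝ)) |>.sub hΦ0
      simpa using this
    apply h.congr'
    filter_upwards [hmemIoc] with s hs
    exact (hG'eq s hs).symm
  -- FTC for G : G r = A * r - Ψ r
  have key2 : ∀ r ∈ Ioc (0:ℝ) R, G r = A * r - Ψ r := by
    intro r hr
    have hstep : ∀ s ∈ Ioc (0:ℝ) r, G r - G s = A * (r - s) - (Ψ r - Ψ s) := by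
      intro s hs
      have hsR : s ∈ Ioc (0:ℝ) R := ⟨hs.1, hs.2.trans hr.2⟩
      have hIccS : Icc s r ⊆ Ioc (0:ℝ) R := fun x hx => ⟨hs.1.trans_le hx.1, hx.2.trans hr.2⟩
      have hftc : ∫ y in s..r, G' y = G r - G s := by
        apply integral_eq_sub_of_hasDeriv_right_of_le hs.2 (hGc.mono hIccS)
        · intro x hx
          have hxS : x ∈ Ioc (0:ℝ) R := hIccS (Ioo_subset_Icc_self hx)
          exact ((hG x hxS).hasDerivAt
            (Ioc_mem_nhds hxS.1 (hx.2.trans_le hr.2))).hasDerivWithinAt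
        · apply ContinuousOn.intervalIntegrable
          rw [uIcc_of_le hs.2]
          exact hG'c.mono hIccS
      have hcongr : ∫ y in s..r, G' y = ∫ y in s..r, (A - Φ y) := by
        apply intervalIntegral.integral_congr
        intro y hy
        rw [uIcc_of_le hs.2] at hy
        exact hG'eq y (hIccS hy)
      have hint2 : ∫ y in s..r, (A - Φ y) = A * (r - s) - (Ψ r - Ψ s) := by
        have hΦi : IntervalIntegrable Φ volume s r := by
          apply ContinuousOn.intervalIntegrable
          rw [uIcc_of_le hs.2]
          exact hΦc.mono (fun x hx => ⟨(hs.1.trans_le hx.1).le, hx.2.trans hr.2⟩)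
        rw [intervalIntegral.integral_sub intervalIntegrable_const hΦi,
          intervalIntegral.integral_const]
        have : Ψ r - Ψ s = ∫ y in s..r, Φ y := by
          rw [hΨ_def]
          exact integral_interval_sub_left
            (hΦint (left_mem_Icc.mpr hR.le) ⟨hr.1.le, hr.2⟩ hr.1.le)
            (hΦint (left_mem_Icc.mpr hR.le) ⟨hs.1.le, hsR.2⟩ hs.1.le)
        rw [← this, smul_eq_mul]; ring
      rw [← hftc, hcongr, hint2]
    have hmemr : Ioc (0:ℝ) r ∈ 𝓝[>] (0:ℝ) := Ioc_mem_nhdsGT hr.1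
    have t1 : Tendsto (fun s => G r - G s) (𝓝[>] (0:ℝ)) (𝓝 (G r)) := by
      have := tendsto_const_nhds (x := G r) (f := 𝓝[>] (0:ℝ)) |>.sub h0
      simpa using this
    have t2 : Tendsto (fun s => A * (r - s) - (Ψ r - Ψ s)) (𝓝[>] (0:ℝ))
        (𝓝 (A * r - Ψ r)) := by
      have ha : Tendsto (fun s : ℝ => A * (r - s)) (𝓝[>] (0:ℝ)) (𝓝 (A * r)) := by
        have : Continuous (fun s : ℝ => A * (r - s)) := by fun_prop
        have := (this.tendsto 0).mono_left (nhdsWithin_le_nhds (s := Ioi (0:ℝ)))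
        simpa using this
      have hb : Tendsto (fun s => Ψ r - Ψ s) (𝓝[>] (0:ℝ)) (𝓝 (Ψ r)) := by
        have := tendsto_const_nhds (x := Ψ r) (f := 𝓝[>] (0:ℝ)) |>.sub hΨ0
        simpa using this
      exact ha.sub hb
    have t1' : Tendsto (fun s => A * (r - s) - (Ψ r - Ψ s)) (𝓝[>] (0:ℝ)) (𝓝 (G r)) := by
      apply t1.congr'
      filter_upwards [hmemr] with s hs
      exact hstep s hs
    have := tendsto_nhds_unique t1' t2
    linarith
  -- A = 1
  have hA1 : A = 1 := by
    have hquot : Tendsto (fun r => G r / r) (𝓝[>] (0:ℝ)) (𝓝 A) := by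
      have hΨr : Tendsto (fun r => Ψ r / r) (𝓝[>] (0:ℝ)) (𝓝 0) := by
        apply squeeze_abs (g := fun r => H * M * r ^ 2 / 6)
        · filter_upwards [hmemIoc] with r hr
          have := hΨb r ⟨hr.1.le, hr.2⟩
          rw [abs_div, abs_of_pos hr.1]
          rw [div_le_iff₀ hr.1]
          calc |Ψ r| ≤ H * M * r ^ 3 / 6 := this
            _ = H * M * r ^ 2 / 6 * r := by ring
        · have : Continuous (fun r : ℝ => H * M * r ^ 2 / 6) := by fun_prop
          have := (this.tendsto 0).mono_left (nhdsWithin_le_nhds (s := Ioi (0:ℝ)))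
          simpa using this
      have h : Tendsto (fun r => A - Ψ r / r) (𝓝[>] (0:ℝ)) (𝓝 A) := by
        have := tendsto_const_nhds (x := A) (f := 𝓝[>] (0:ℝ)) |>.sub hΨr
        simpa using this
      apply h.congr'
      filter_upwards [hmemIoc] with r hr
      have hr0 : r ≠ 0 := ne_of_gt hr.1
      rw [key2 r hr]
      field_simp
    exact tendsto_nhds_unique hquot h1
  rw [hA1] at hG'0 key2
  -- bound M
  have hΨb' : ∀ r ∈ Ioc (0:ℝ) R, |Ψ r| ≤ 5 / 12 * M * r := by
    intro r hr
    have h1' := hΨb r ⟨hr.1.le, hr.2⟩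
    have hr2 : H * r ^ 2 ≤ 10 / 4 := by
      have hrR : r ^ 2 ≤ R ^ 2 := pow_le_pow_left₀ hr.1.le hr.2 2
      have : H * r ^ 2 ≤ H * R ^ 2 := mul_le_mul_of_nonneg_left hrR hH.le
      linarith [hHR, hpi2]
    calc |Ψ r| ≤ H * M * r ^ 3 / 6 := h1'
      _ = (H * r ^ 2) * (M * r / 6) := by ring
      _ ≤ (10 / 4) * (M * r / 6) := by
          apply mul_le_mul_of_nonneg_right hr2
          have := mul_nonneg hMnonneg hr.1.le
          linarith
      _ = 5 / 12 * M * r := by ring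
  -- M ≤ 2
  have hM2 : M ≤ 2 := by
    rcases eq_or_ne t₀ 0 with rfl | ht₀0
    · rw [hM_def, hφ_def]; norm_num
    · have ht₀pos : 0 < t₀ := lt_of_le_of_ne ht₀.1 (Ne.symm ht₀0)
      have ht₀Ioc : t₀ ∈ Ioc (0:ℝ) R := ⟨ht₀pos, ht₀.2⟩
      have e : φ t₀ = 1 - Ψ t₀ / t₀ := by
        rw [hφ_def]; simp only [if_neg ht₀0]
        rw [key2 t₀ ht₀Ioc]
        field_simp
      have hq : |Ψ t₀| / t₀ ≤ 5 / 12 * M := by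
        rw [div_le_iff₀ ht₀pos]
        have := hΨb' t₀ ht₀Ioc
        linarith
      have habs : |φ t₀| ≤ 1 + |Ψ t₀| / t₀ := by
        rw [e]
        have hx := le_abs_self (Ψ t₀ / t₀)
        have hx2 := neg_abs_le (Ψ t₀ / t₀)
        have heq : |Ψ t₀ / t₀| = |Ψ t₀| / t₀ := by
          rw [abs_div, abs_of_pos ht₀pos]
        rw [abs_le]
        constructor <;> [linarith [heq ▸ hx2]; linarith [heq ▸ hx]]
      have : M ≤ 1 + 5 / 12 * M := by
        rw [hM_def]
        calc |φ t₀| ≤ 1 + |Ψ t₀| / t₀ := habs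
          _ ≤ 1 + 5 / 12 * M := by linarith
      linarith
  refine ⟨fun r hr => ?_, hG'0⟩
  have hGr := key2 r hr
  have hb := hΨb' r hr
  have h5 : 5 / 12 * M * r ≤ 5 / 6 * r := by nlinarith [hr.1.le]
  have hx := le_abs_self (Ψ r)
  have hx2 := neg_abs_le (Ψ r)
  constructor <;> [nlinarith; nlinarith]


/-- Stability of the Jacobi equation: solutions with nearby coefficients have
logarithmically close values (from the proof of Theorem B, Section 3 of the paper). -/
theorem jacobi_stability :
    ∃ C : ℝ, 0 < C ∧
      ∀ (H R ε : ℝ) (K₁ K₂ G₁ G₂ G₁' G₂' : ℝ → ℝ),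
        0 < H → 0 < R → 0 < ε → H * R ^ 2 ≤ Real.pi ^ 2 / 4 →
        ContinuousOn K₁ (Ioc 0 R) → ContinuousOn K₂ (Ioc 0 R) →
        (∀ x ∈ Ioc (0:ℝ) R, |K₁ x| ≤ H ∧ |K₂ x| ≤ H ∧ |K₁ x - K₂ x| ≤ ε) →
        (∀ x ∈ Ioc (0:ℝ) R, HasDerivWithinAt G₁ (G₁' x) (Ioc 0 R) x) →
        (∀ x ∈ Ioc (0:ℝ) R, HasDerivWithinAt G₁' (-(K₁ x * G₁ x)) (Ioc 0 R) x) →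
        (∀ x ∈ Ioc (0:ℝ) R, HasDerivWithinAt G₂ (G₂' x) (Ioc 0 R) x) →
        (∀ x ∈ Ioc (0:ℝ) R, HasDerivWithinAt G₂' (-(K₂ x * G₂ x)) (Ioc 0 R) x) →
        Filter.Tendsto G₁ (nhdsWithin 0 (Ioi 0)) (nhds 0) →
        Filter.Tendsto G₂ (nhdsWithin 0 (Ioi 0)) (nhds 0) →
        Filter.Tendsto (fun r => G₁ r / r) (nhdsWithin 0 (Ioi 0)) (nhds 1) →
        Filter.Tendsto (fun r => G₂ r / r) (nhdsWithin 0 (Ioi 0)) (nhds 1) →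
        ∀ r ∈ Ioc (0:ℝ) R,
          0 < G₁ r ∧ 0 < G₂ r ∧ |Real.log (G₁ r / G₂ r)| ≤ C * ε * r ^ 2 := by
  refine ⟨24, by norm_num, ?_⟩
  intro H R ε K₁ K₂ G₁ G₂ G₁' G₂' hH hR hε hHR hK₁c hK₂c hKb hG₁ hG₁' hG₂ hG₂'
    h0₁ h0₂ h1₁ h1₂
  obtain ⟨hbd₁, hd₁0⟩ := jacobi_aux H R K₁ G₁ G₁' hH hR hHR hK₁c
    (fun x hx => (hKb x hx).1) hG₁ hG₁' h0₁ h1₁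
  obtain ⟨hbd₂, hd₂0⟩ := jacobi_aux H R K₂ G₂ G₂' hH hR hHR hK₂c
    (fun x hx => (hKb x hx).2.1) hG₂ hG₂' h0₂ h1₂
  have hG₁pos : ∀ x ∈ Ioc (0:ℝ) R, 0 < G₁ x := fun x hx =>
    lt_of_lt_of_le (by linarith [hx.1] : (0:ℝ) < x / 6) (hbd₁ x hx).1
  have hG₂pos : ∀ x ∈ Ioc (0:ℝ) R, 0 < G₂ x := fun x hx =>
    lt_of_lt_of_le (by linarith [hx.1] : (0:ℝ) < x / 6) (hbd₂ x hx).1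
  have hmemIoc : Ioc (0:ℝ) R ∈ 𝓝[>] (0:ℝ) := Ioc_mem_nhdsGT hR
  -- continuity
  have hG₁c : ContinuousOn G₁ (Ioc 0 R) := fun x hx => (hG₁ x hx).continuousWithinAt
  have hG₂c : ContinuousOn G₂ (Ioc 0 R) := fun x hx => (hG₂ x hx).continuousWithinAt
  have hG₁'c : ContinuousOn G₁' (Ioc 0 R) := fun x hx => (hG₁' x hx).continuousWithinAt
  have hG₂'c : ContinuousOn G₂' (Ioc 0 R) := fun x hx => (hG₂' x hx).continuousWithinAt
  -- Wronskian
  set W : ℝ → ℝ := fun t => G₁ t * G₂' t - G₁' t * G₂ t with hW_def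
  have hWc : ContinuousOn W (Ioc 0 R) := ((hG₁c.mul hG₂'c).sub (hG₁'c.mul hG₂c))
  have hWd : ∀ x ∈ Ioo (0:ℝ) R, HasDerivAt W ((K₁ x - K₂ x) * (G₁ x * G₂ x)) x := by
    intro x hx
    have hxS : x ∈ Ioc (0:ℝ) R := Ioo_subset_Ioc_self hx
    have hmem : Ioc (0:ℝ) R ∈ 𝓝 x := Ioc_mem_nhds hx.1 hx.2
    have d1 : HasDerivAt G₁ (G₁' x) x := (hG₁ x hxS).hasDerivAt hmem
    have d2 : HasDerivAt G₂ (G₂' x) x := (hG₂ x hxS).hasDerivAt hmem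
    have d3 : HasDerivAt G₁' (-(K₁ x * G₁ x)) x := (hG₁' x hxS).hasDerivAt hmem
    have d4 : HasDerivAt G₂' (-(K₂ x * G₂ x)) x := (hG₂' x hxS).hasDerivAt hmem
    have : HasDerivAt (fun y => G₁ y * G₂' y - G₁' y * G₂ y) _ x := (d1.mul d4).sub (d3.mul d2)
    convert this using 1
    ring
  have hW0 : Tendsto W (𝓝[>] (0:ℝ)) (𝓝 0) := by
    have : Tendsto W (𝓝[>] (0:ℝ)) (𝓝 (0 * 1 - 1 * 0)) :=
      (h0₁.mul hd₂0).sub (hd₁0.mul h0₂)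
    simpa using this
  -- bound on W
  have hWb : ∀ x ∈ Ioc (0:ℝ) R, |W x| ≤ 4 / 3 * ε * x ^ 3 := by
    intro x hx
    have key : ∀ s ∈ Ioc (0:ℝ) x, |W x| ≤ |W s| + 4 / 3 * ε * x ^ 3 := by
      intro s hs
      have hIcc : Icc s x ⊆ Ioc (0:ℝ) R := fun y hy =>
        ⟨hs.1.trans_le hy.1, hy.2.trans hx.2⟩
      have hftc : ∫ y in s..x, (K₁ y - K₂ y) * (G₁ y * G₂ y) = W x - W s := by
        apply integral_eq_sub_of_hasDeriv_right_of_le hs.2 (hWc.mono hIcc)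
        · intro y hy
          exact ((hWd y ⟨hs.1.trans hy.1, hy.2.trans_le hx.2⟩).hasDerivWithinAt)
        · apply ContinuousOn.intervalIntegrable
          rw [uIcc_of_le hs.2]
          exact (((hK₁c.mono hIcc).sub (hK₂c.mono hIcc)).mul
            ((hG₁c.mono hIcc).mul (hG₂c.mono hIcc)))
      have hintb : |∫ y in s..x, (K₁ y - K₂ y) * (G₁ y * G₂ y)| ≤
          ∫ y in s..x, 4 * ε * y ^ 2 := by
        apply abs_intInt_le hs.2
        · apply ContinuousOn.intervalIntegrable
          rw [uIcc_of_le hs.2]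
          exact (((hK₁c.mono hIcc).sub (hK₂c.mono hIcc)).mul
            ((hG₁c.mono hIcc).mul (hG₂c.mono hIcc)))
        · apply ContinuousOn.intervalIntegrable; fun_prop
        · intro y hy
          have hyS : y ∈ Ioc (0:ℝ) R := hIcc hy
          have hy1 := (hbd₁ y hyS)
          have hy2 := (hbd₂ y hyS)
          have hKy := (hKb y hyS).2.2
          have hg1 : |G₁ y| ≤ 2 * y := by
            rw [abs_of_pos (hG₁pos y hyS)]; exact hy1.2
          have hg2 : |G₂ y| ≤ 2 * y := by
            rw [abs_of_pos (hG₂pos y hyS)]; exact hy2.2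
          calc |(K₁ y - K₂ y) * (G₁ y * G₂ y)|
              = |K₁ y - K₂ y| * (|G₁ y| * |G₂ y|) := by rw [abs_mul, abs_mul]
            _ ≤ ε * (2 * y * (2 * y)) := by
                apply mul_le_mul hKy _ (by positivity) hε.le
                exact mul_le_mul hg1 hg2 (abs_nonneg _) (by linarith [hyS.1])
            _ = 4 * ε * y ^ 2 := by ring
      have hval : ∫ y in s..x, 4 * ε * y ^ 2 ≤ 4 / 3 * ε * x ^ 3 := by
        rw [intervalIntegral.integral_const_mul, integral_pow]
        have h3 : (0:ℝ) ≤ s ^ 3 := le_of_lt (pow_pos hs.1 3)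
        norm_num
        nlinarith [hε.le]
      have h1 := abs_sub_abs_le_abs_sub (W x) (W s)
      have h2 : |W x - W s| ≤ 4 / 3 * ε * x ^ 3 := hftc ▸ (hintb.trans hval)
      linarith
    have hx3 : Tendsto (fun s => |W s| + 4 / 3 * ε * x ^ 3) (𝓝[>] (0:ℝ))
        (𝓝 (4 / 3 * ε * x ^ 3)) := by
      have := hW0.abs.add (tendsto_const_nhds (x := 4 / 3 * ε * x ^ 3)
        (f := 𝓝[>] (0:ℝ)))
      simpa using this
    apply ge_of_tendsto hx3
    filter_upwards [Ioc_mem_nhdsGT hx.1] with s hs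
    exact key s hs
  -- log derivative bound
  have hDb : ∀ t ∈ Ioc (0:ℝ) R, |G₁' t / G₁ t - G₂' t / G₂ t| ≤ 48 * ε * t := by
    intro t ht
    have hp1 := hG₁pos t ht
    have hp2 := hG₂pos t ht
    have heq : G₁' t / G₁ t - G₂' t / G₂ t = -W t / (G₁ t * G₂ t) := by
      rw [hW_def]
      field_simp
      try ring
    rw [heq, abs_div, abs_neg, abs_of_pos (mul_pos hp1 hp2)]
    have hden : t ^ 2 / 36 ≤ G₁ t * G₂ t := by
      have h1 := (hbd₁ t ht).1
      have h2 := (hbd₂ t ht).1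
      nlinarith [ht.1.le]
    have hnum := hWb t ht
    have ht0 : t ≠ 0 := ne_of_gt ht.1
    have hdenpos : (0:ℝ) < t ^ 2 / 36 := by
      have := pow_pos ht.1 2; linarith
    calc |W t| / (G₁ t * G₂ t) ≤ (4 / 3 * ε * t ^ 3) / (t ^ 2 / 36) := by
          apply div_le_div₀ _ hnum hdenpos hden
          have := pow_pos ht.1 3
          nlinarith [hε.le]
      _ = 48 * ε * t := by
          field_simp
          ring
  intro r hr
  refine ⟨hG₁pos r hr, hG₂pos r hr, ?_⟩
  -- FTC for the log difference
  set L : ℝ → ℝ := fun t => Real.log (G₁ t) - Real.log (G₂ t) with hL_def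
  have key : ∀ s ∈ Ioc (0:ℝ) r, |L r| ≤ |L s| + 24 * ε * r ^ 2 := by
    intro s hs
    have hIcc : Icc s r ⊆ Ioc (0:ℝ) R := fun y hy =>
      ⟨hs.1.trans_le hy.1, hy.2.trans hr.2⟩
    have hLc : ContinuousOn L (Icc s r) := by
      apply ContinuousOn.sub
      · exact ((hG₁c.mono hIcc).log (fun y hy => ne_of_gt (hG₁pos y (hIcc hy))))
      · exact ((hG₂c.mono hIcc).log (fun y hy => ne_of_gt (hG₂pos y (hIcc hy))))
    have hftc : ∫ y in s..r, (G₁' y / G₁ y - G₂' y / G₂ y) = L r - L s := by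
      apply integral_eq_sub_of_hasDeriv_right_of_le hs.2 hLc
      · intro y hy
        have hyS : y ∈ Ioc (0:ℝ) R := hIcc (Ioo_subset_Icc_self hy)
        have hmem : Ioc (0:ℝ) R ∈ 𝓝 y := Ioc_mem_nhds hyS.1 (hy.2.trans_le hr.2)
        have d1 : HasDerivAt G₁ (G₁' y) y := (hG₁ y hyS).hasDerivAt hmem
        have d2 : HasDerivAt G₂ (G₂' y) y := (hG₂ y hyS).hasDerivAt hmem
        exact ((d1.log (ne_of_gt (hG₁pos y hyS))).sub
          (d2.log (ne_of_gt (hG₂pos y hyS)))).hasDerivWithinAt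
      · apply ContinuousOn.intervalIntegrable
        rw [uIcc_of_le hs.2]
        apply ContinuousOn.sub
        · exact (hG₁'c.mono hIcc).div (hG₁c.mono hIcc)
            (fun y hy => ne_of_gt (hG₁pos y (hIcc hy)))
        · exact (hG₂'c.mono hIcc).div (hG₂c.mono hIcc)
            (fun y hy => ne_of_gt (hG₂pos y (hIcc hy)))
    have hintb : |∫ y in s..r, (G₁' y / G₁ y - G₂' y / G₂ y)| ≤
        ∫ y in s..r, 48 * ε * y := by
      apply abs_intInt_le hs.2
      · apply ContinuousOn.intervalIntegrable
        rw [uIcc_of_le hs.2]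
        apply ContinuousOn.sub
        · exact (hG₁'c.mono hIcc).div (hG₁c.mono hIcc)
            (fun y hy => ne_of_gt (hG₁pos y (hIcc hy)))
        · exact (hG₂'c.mono hIcc).div (hG₂c.mono hIcc)
            (fun y hy => ne_of_gt (hG₂pos y (hIcc hy)))
      · apply ContinuousOn.intervalIntegrable; fun_prop
      · exact fun y hy => hDb y (hIcc hy)
    have hval : ∫ y in s..r, 48 * ε * y ≤ 24 * ε * r ^ 2 := by
      rw [intervalIntegral.integral_const_mul, integral_id]
      have h2 : (0:ℝ) ≤ s ^ 2 := sq_nonneg s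
      nlinarith [hε.le]
    have h1 := abs_sub_abs_le_abs_sub (L r) (L s)
    have h2 : |L r - L s| ≤ 24 * ε * r ^ 2 := hftc ▸ (hintb.trans hval)
    linarith
  have hL0 : Tendsto L (𝓝[>] (0:ℝ)) (𝓝 0) := by
    have hlog : Tendsto Real.log (𝓝 (1:ℝ)) (𝓝 0) := by
      have := (Real.continuousAt_log one_ne_zero).tendsto
      rwa [Real.log_one] at this
    have t1 : Tendsto (fun s => Real.log (G₁ s / s)) (𝓝[>] (0:ℝ)) (𝓝 0) :=
      hlog.comp h1₁
    have t2 : Tendsto (fun s => Real.log (G₂ s / s)) (𝓝[>] (0:ℝ)) (𝓝 0) :=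
      hlog.comp h1₂
    have := t1.sub t2
    rw [sub_zero] at this
    apply this.congr'
    filter_upwards [hmemIoc] with s hs
    rw [hL_def]
    have hs0 : s ≠ 0 := ne_of_gt hs.1
    rw [Real.log_div (ne_of_gt (hG₁pos s hs)) hs0,
      Real.log_div (ne_of_gt (hG₂pos s hs)) hs0]
    ring
  have hfin : |L r| ≤ 24 * ε * r ^ 2 := by
    have hx3 : Tendsto (fun s => |L s| + 24 * ε * r ^ 2) (𝓝[>] (0:ℝ))
        (𝓝 (24 * ε * r ^ 2)) := by
      have := hL0.abs.add (tendsto_const_nhds (x := 24 * ε * r ^ 2)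
        (f := 𝓝[>] (0:ℝ)))
      simpa using this
    apply ge_of_tendsto hx3
    filter_upwards [Ioc_mem_nhdsGT hr.1] with s hs
    exact key s hs
  rw [Real.log_div (ne_of_gt (hG₁pos r hr)) (ne_of_gt (hG₂pos r hr))]
  exact hfin
end

section
/- Let H, r₀ > 0 with H·r₀² ≤ π²/4, let K : (0, r₀] → [−H, H] be continuous, and let G : (0, r₀] → ℝ be a C² solution of G″ + K·G = 0 with G(r) → 0 and G(r)/r → 1 as r → 0⁺. Then G′(r₀) ≥ cos(√H·r₀), and consequently ∫₀^{r₀} K(r)·G(r) dr = 1 − G′(r₀) ≤ 1 − cos(√H·r₀). -/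
open Set MeasureTheory

lemma ftc_aux {f f' : ℝ → ℝ} {r₀ a b : ℝ}
    (h : ∀ r ∈ Ioc (0:ℝ) r₀, HasDerivWithinAt f (f' r) (Ioc 0 r₀) r)
    (hc : ContinuousOn f' (Ioc 0 r₀))
    (ha : 0 < a) (hab : a ≤ b) (hb : b ≤ r₀) :
    ∫ t in a..b, f' t = f b - f a := by
  have hsub : Icc a b ⊆ Ioc 0 r₀ := fun x hx => ⟨lt_of_lt_of_le ha hx.1, le_trans hx.2 hb⟩
  have hfc : ContinuousOn f (Ioc 0 r₀) := fun x hx => (h x hx).continuousWithinAt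
  apply intervalIntegral.integral_eq_sub_of_hasDeriv_right_of_le hab (hfc.mono hsub)
  · intro x hx
    have hx' : x ∈ Ioc (0:ℝ) r₀ := ⟨lt_of_lt_of_le ha hx.1.le, le_trans hx.2.le hb⟩
    refine (h x hx').mono_of_mem_nhdsWithin ?_
    have hss : Ioo x r₀ ⊆ Ioc 0 r₀ := fun y hy => ⟨lt_trans hx'.1 hy.1, hy.2.le⟩
    refine Filter.mem_of_superset ?_ hss
    rw [mem_nhdsWithin_iff_exists_mem_nhds_inter]
    exact ⟨Iio r₀, Iio_mem_nhds (lt_of_lt_of_le hx.2 hb), fun y hy => ⟨hy.2, hy.1⟩⟩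
  · exact (hc.mono hsub).intervalIntegrable_of_Icc hab

/-- The Gauss–Bonnet-type estimate from the proof of Lemma 4.8 of the paper:
`G'(r₀) ≥ cos(√H r₀)` and `∫₀^{r₀} K G = 1 - G'(r₀) ≤ 1 - cos(√H r₀)`. -/
theorem jacobi_derivative_bound (H r₀ : ℝ) (hH : 0 < H) (hr₀ : 0 < r₀)
    (hHr : H * r₀ ^ 2 ≤ Real.pi ^ 2 / 4)
    (K G G' : ℝ → ℝ)
    (hKc : ContinuousOn K (Ioc 0 r₀))
    (hKb : ∀ r ∈ Ioc (0:ℝ) r₀, |K r| ≤ H)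
    (hG' : ∀ r ∈ Ioc (0:ℝ) r₀, HasDerivWithinAt G (G' r) (Ioc 0 r₀) r)
    (hG'' : ∀ r ∈ Ioc (0:ℝ) r₀, HasDerivWithinAt G' (-(K r * G r)) (Ioc 0 r₀) r)
    (h0 : Filter.Tendsto G (nhdsWithin 0 (Ioi 0)) (nhds 0))
    (h1 : Filter.Tendsto (fun r => G r / r) (nhdsWithin 0 (Ioi 0)) (nhds 1)) :
    Real.cos (Real.sqrt H * r₀) ≤ G' r₀ ∧
    (∫ r in (0:ℝ)..r₀, K r * G r) = 1 - G' r₀ ∧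
    (∫ r in (0:ℝ)..r₀, K r * G r) ≤ 1 - Real.cos (Real.sqrt H * r₀) := by
  have hGc : ContinuousOn G (Ioc 0 r₀) := fun x hx => (hG' x hx).continuousWithinAt
  have hG'c : ContinuousOn G' (Ioc 0 r₀) := fun x hx => (hG'' x hx).continuousWithinAt
  -- bound on G
  obtain ⟨δ, hδpos, hδ⟩ : ∃ δ > 0, ∀ r ∈ Ioo (0:ℝ) δ, |G r| ≤ 1 := by
    have h := h0.eventually (Metric.ball_mem_nhds (0:ℝ) one_pos)
    rw [eventually_nhdsWithin_iff, Metric.eventually_nhds_iff] at h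
    obtain ⟨ε, hε, h⟩ := h
    refine ⟨ε, hε, fun r hr => ?_⟩
    have := h (show dist r 0 < ε by simpa [Real.dist_eq, abs_of_pos hr.1] using hr.2) hr.1
    simpa [Real.dist_eq] using this.le
  obtain ⟨C₂, hC₂⟩ := (isCompact_Icc : IsCompact (Icc (δ/2) r₀)).exists_bound_of_continuousOn
    (hGc.mono (fun x hx => ⟨lt_of_lt_of_le (by positivity) hx.1, hx.2⟩))
  set C := max C₂ 1 with hCdef
  have hC0 : (0:ℝ) ≤ C := le_trans zero_le_one (le_max_right _ _)
  have hC : ∀ r ∈ Ioc (0:ℝ) r₀, |G r| ≤ C := by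
    intro r hr
    rcases le_or_gt (δ/2) r with h' | h'
    · exact le_trans (hC₂ r ⟨h', hr.2⟩) (le_max_left _ _)
    · exact le_trans (hδ r ⟨hr.1, lt_of_lt_of_le h' (by linarith)⟩) (le_max_right _ _)
  -- continuity of -K*G
  have hKGc : ContinuousOn (fun r => -(K r * G r)) (Ioc 0 r₀) := (hKc.mul hGc).neg
  -- step: G' almost constant
  have hstep : ∀ r ∈ Ioc (0:ℝ) r₀, ∀ t ∈ Ioc (0:ℝ) r, |G' t - G' r| ≤ H * C * r := by
    intro r hr t ht
    have hftc := ftc_aux hG'' hKGc ht.1 ht.2 hr.2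
    have hb : ∀ x ∈ uIoc t r, ‖-(K x * G x)‖ ≤ H * C := by
      intro x hx
      rw [uIoc_of_le ht.2] at hx
      have hx' : x ∈ Ioc (0:ℝ) r₀ := ⟨lt_trans ht.1 hx.1, le_trans hx.2 hr.2⟩
      rw [norm_neg, Real.norm_eq_abs, abs_mul]
      exact mul_le_mul (hKb x hx') (hC x hx') (abs_nonneg _) (le_trans (abs_nonneg _) (hKb x hx'))
    have := intervalIntegral.norm_integral_le_of_norm_le_const hb
    rw [hftc] at this
    have h1' : |r - t| ≤ r := by rw [abs_of_nonneg (by linarith [ht.2])]; linarith [ht.1]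
    calc |G' t - G' r| = ‖G' r - G' t‖ := by rw [Real.norm_eq_abs, abs_sub_comm]
      _ ≤ H * C * |r - t| := this
      _ ≤ H * C * r := by nlinarith [mul_nonneg hH.le hC0]
  have hest : ∀ r ∈ Ioc (0:ℝ) r₀, |G' r - G r / r| ≤ H * C * r := by
    intro r hr
    have key : |G r - r * G' r| ≤ H * C * r * r := by
      have hev : ∀ᶠ ε in nhdsWithin (0:ℝ) (Ioi 0),
          |G r - G ε - (r - ε) * G' r| ≤ H * C * r * r := by
        filter_upwards [Ioo_mem_nhdsGT_of_mem (⟨le_refl _, hr.1⟩ : (0:ℝ) ∈ Ico 0 r)]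
          with ε hε
        have hεr : ε ∈ Ioc (0:ℝ) r₀ := ⟨hε.1, le_trans hε.2.le hr.2⟩
        have hftcG := ftc_aux hG' hG'c hε.1 hε.2.le hr.2
        have hconst : ∫ t in ε..r, G' r = (r - ε) * G' r := by
          simp [intervalIntegral.integral_const, smul_eq_mul]
        have hsplit : G r - G ε - (r - ε) * G' r = ∫ t in ε..r, (G' t - G' r) := by
          rw [intervalIntegral.integral_sub, hftcG, hconst]
          · exact (hG'c.mono (fun x hx => ⟨lt_of_lt_of_le hε.1 hx.1,
              le_trans hx.2 hr.2⟩)).intervalIntegrable_of_Icc hε.2.le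
          · exact intervalIntegrable_const
        have hb : ∀ x ∈ uIoc ε r, ‖G' x - G' r‖ ≤ H * C * r := by
          intro x hx
          rw [uIoc_of_le hε.2.le] at hx
          exact hstep r hr x ⟨lt_trans hε.1 hx.1, hx.2⟩
        have := intervalIntegral.norm_integral_le_of_norm_le_const hb
        rw [← hsplit] at this
        have h1' : |r - ε| ≤ r := by rw [abs_of_nonneg (by linarith [hε.2.le])]; linarith [hε.1]
        calc |G r - G ε - (r - ε) * G' r| ≤ H * C * r * |r - ε| := this
          _ ≤ H * C * r * r := by nlinarith [mul_nonneg (mul_nonneg hH.le hC0) hr.1.le]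
      have hlim : Filter.Tendsto (fun ε => |G r - G ε - (r - ε) * G' r|)
          (nhdsWithin (0:ℝ) (Ioi 0)) (nhds (|G r - 0 - (r - 0) * G' r|)) := by
        apply Filter.Tendsto.abs
        exact (tendsto_const_nhds.sub h0).sub
          ((tendsto_const_nhds.sub (Filter.tendsto_id.mono_left nhdsWithin_le_nhds)).mul
            tendsto_const_nhds)
      have := le_of_tendsto hlim hev
      simpa using this
    have hrne : r ≠ 0 := ne_of_gt hr.1
    rw [show G' r - G r / r = -((G r - r * G' r) / r) by field_simp; ring, abs_neg, abs_div,
      abs_of_pos hr.1, div_le_iff₀ hr.1]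
    calc |G r - r * G' r| ≤ H * C * r * r := key
      _ = H * C * r * r := rfl
  have hL : Filter.Tendsto G' (nhdsWithin (0:ℝ) (Ioi 0)) (nhds 1) := by
    have hz : Filter.Tendsto (fun r => G' r - G r / r) (nhdsWithin (0:ℝ) (Ioi 0)) (nhds 0) := by
      apply squeeze_zero_norm'
      · filter_upwards [Ioo_mem_nhdsGT_of_mem (⟨le_refl _, hr₀⟩ : (0:ℝ) ∈ Ico 0 r₀)] with r hr
        exact hest r ⟨hr.1, hr.2.le⟩
      · have : Filter.Tendsto (fun r : ℝ => H * C * r) (nhdsWithin (0:ℝ) (Ioi 0))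
            (nhds (H * C * 0)) :=
          (tendsto_const_nhds.mul (Filter.tendsto_id.mono_left nhdsWithin_le_nhds))
        simpa using this
    have := hz.add h1
    simpa using this
  -- FTC identity for the integral
  have hKGc2 : ContinuousOn (fun r => K r * G r) (Ioc 0 r₀) := hKc.mul hGc
  have hftc : ∀ ε ∈ Ioc (0:ℝ) r₀, (∫ r in ε..r₀, K r * G r) = G' ε - G' r₀ := by
    intro ε hε
    have h := ftc_aux hG'' hKGc hε.1 hε.2 (le_refl _)
    rw [intervalIntegral.integral_neg] at h
    linarith
  have hIdent : (∫ r in (0:ℝ)..r₀, K r * G r) = 1 - G' r₀ := by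
    have hbd : ∀ x ∈ Ioc (0:ℝ) r₀, ‖K x * G x‖ ≤ H * C := by
      intro x hx
      rw [Real.norm_eq_abs, abs_mul]
      exact mul_le_mul (hKb x hx) (hC x hx) (abs_nonneg _) (le_trans (abs_nonneg _) (hKb x hx))
    have hInt : IntegrableOn (fun r => K r * G r) (Ioc 0 r₀) := by
      refine Integrable.mono' (integrable_const (H * C))
        (hKGc2.aestronglyMeasurable measurableSet_Ioc) ?_
      exact (ae_restrict_iff' measurableSet_Ioc).2 (ae_of_all _ hbd)
    have hII : ∀ a b : ℝ, 0 ≤ a → a ≤ b → b ≤ r₀ →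
        IntervalIntegrable (fun r => K r * G r) volume a b := by
      intro a b ha hab hb
      rw [intervalIntegrable_iff_integrableOn_Ioc_of_le hab]
      exact hInt.mono_set (Ioc_subset_Ioc (by linarith) hb)
    have hev : ∀ᶠ ε in nhdsWithin (0:ℝ) (Ioi 0),
        (∫ r in ε..r₀, K r * G r) = G' ε - G' r₀ := by
      filter_upwards [Ioo_mem_nhdsGT_of_mem (⟨le_refl _, hr₀⟩ : (0:ℝ) ∈ Ico 0 r₀)] with ε hε
      exact hftc ε ⟨hε.1, hε.2.le⟩
    have hzero : Filter.Tendsto (fun ε => ∫ r in (0:ℝ)..ε, K r * G r)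
        (nhdsWithin (0:ℝ) (Ioi 0)) (nhds 0) := by
      apply squeeze_zero_norm'
      · filter_upwards [Ioo_mem_nhdsGT_of_mem (⟨le_refl _, hr₀⟩ : (0:ℝ) ∈ Ico 0 r₀)] with ε hε
        have hb : ∀ x ∈ uIoc (0:ℝ) ε, ‖K x * G x‖ ≤ H * C := by
          intro x hx
          rw [uIoc_of_le hε.1.le] at hx
          exact hbd x ⟨hx.1, le_trans hx.2 hε.2.le⟩
        have := intervalIntegral.norm_integral_le_of_norm_le_const hb
        calc ‖∫ r in (0:ℝ)..ε, K r * G r‖ ≤ H * C * |ε - 0| := this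
          _ = H * C * ε := by rw [sub_zero, abs_of_pos hε.1]
      · have : Filter.Tendsto (fun ε : ℝ => H * C * ε) (nhdsWithin (0:ℝ) (Ioi 0))
            (nhds (H * C * 0)) :=
          tendsto_const_nhds.mul (Filter.tendsto_id.mono_left nhdsWithin_le_nhds)
        simpa using this
    have hlim1 : Filter.Tendsto (fun ε => ∫ r in ε..r₀, K r * G r)
        (nhdsWithin (0:ℝ) (Ioi 0)) (nhds (∫ r in (0:ℝ)..r₀, K r * G r)) := by
      have heq : ∀ᶠ ε in nhdsWithin (0:ℝ) (Ioi 0), (∫ r in (0:ℝ)..r₀, K r * G r) -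
          (∫ r in (0:ℝ)..ε, K r * G r) = ∫ r in ε..r₀, K r * G r := by
        filter_upwards [Ioo_mem_nhdsGT_of_mem (⟨le_refl _, hr₀⟩ : (0:ℝ) ∈ Ico 0 r₀)] with ε hε
        have := intervalIntegral.integral_add_adjacent_intervals
          (hII 0 ε (le_refl _) hε.1.le hε.2.le) (hII ε r₀ hε.1.le hε.2.le (le_refl _))
        linarith
      refine Filter.Tendsto.congr' heq ?_
      have := (tendsto_const_nhds (α := ℝ)
        (x := ∫ r in (0:ℝ)..r₀, K r * G r) (f := nhdsWithin (0:ℝ) (Ioi 0))).sub hzero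
      simpa using this
    exact tendsto_nhds_unique (hlim1.congr' hev) (hL.sub tendsto_const_nhds)
  -- the comparison estimate
  have hMain : Real.cos (Real.sqrt H * r₀) ≤ G' r₀ := by
    set sH := Real.sqrt H with hsHdef
    have hsH : 0 < sH := Real.sqrt_pos.2 hH
    have hsq : sH * sH = H := Real.mul_self_sqrt hH.le
    have hθr₀ : sH * r₀ ≤ Real.pi / 2 := by
      have h1' : Real.sqrt (H * r₀ ^ 2) ≤ Real.sqrt (Real.pi ^ 2 / 4) := Real.sqrt_le_sqrt hHr
      rw [Real.sqrt_mul hH.le, Real.sqrt_sq hr₀.le,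
        show (Real.pi ^ 2 / 4 : ℝ) = (Real.pi / 2) ^ 2 by ring,
        Real.sqrt_sq (by positivity)] at h1'
      exact h1'
    have hθle : ∀ r ∈ Ioc (0:ℝ) r₀, sH * r ≤ Real.pi / 2 := fun r hr =>
      le_trans (mul_le_mul_of_nonneg_left hr.2 hsH.le) hθr₀
    set s : ℝ → ℝ := fun r => Real.sin (sH * r) / sH with hsdef
    have hscont : Continuous s := by
      exact (Real.continuous_sin.comp (continuous_const.mul continuous_id)).div_const sH
    have hs_pos : ∀ r ∈ Ioc (0:ℝ) r₀, 0 < s r := by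
      intro r hr
      apply div_pos _ hsH
      apply Real.sin_pos_of_pos_of_lt_pi (mul_pos hsH hr.1)
      linarith [hθle r hr, Real.pi_pos]
    have hcos_nonneg : ∀ r ∈ Ioc (0:ℝ) r₀, 0 ≤ Real.cos (sH * r) := fun r hr =>
      Real.cos_nonneg_of_mem_Icc ⟨by nlinarith [mul_pos hsH hr.1, Real.pi_pos], hθle r hr⟩
    have hs_deriv : ∀ r : ℝ, HasDerivAt s (Real.cos (sH * r)) r := by
      intro r
      have h := ((Real.hasDerivAt_sin (sH * r)).comp r
        ((hasDerivAt_id r).const_mul sH)).div_const sH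
      refine h.congr_deriv ?_
      field_simp
    have hc_deriv : ∀ r : ℝ, HasDerivAt (fun t => Real.cos (sH * t)) (-H * s r) r := by
      intro r
      have h := (Real.hasDerivAt_cos (sH * r)).comp r ((hasDerivAt_id r).const_mul sH)
      refine h.congr_deriv ?_
      rw [hsdef]
      field_simp
      linear_combination (-Real.sin (sH * r)) * hsq
    set W : ℝ → ℝ := fun r => G' r * s r - G r * Real.cos (sH * r) with hWdef
    -- limits at 0
    have hs0 : Filter.Tendsto s (nhdsWithin (0:ℝ) (Ioi 0)) (nhds 0) := by
      have := (hscont.tendsto 0).mono_left (nhdsWithin_le_nhds (s := Ioi (0:ℝ)))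
      simpa [hsdef] using this
    have hc0 : Filter.Tendsto (fun r => Real.cos (sH * r)) (nhdsWithin (0:ℝ) (Ioi 0)) (nhds 1) := by
      have hco : Continuous fun r : ℝ => Real.cos (sH * r) :=
        Real.continuous_cos.comp (continuous_const.mul continuous_id)
      have := (hco.tendsto 0).mono_left (nhdsWithin_le_nhds (s := Ioi (0:ℝ)))
      simpa using this
    have hWlim : Filter.Tendsto W (nhdsWithin (0:ℝ) (Ioi 0)) (nhds 0) := by
      have := (hL.mul hs0).sub (h0.mul hc0)
      simpa using this
    -- sine ratio limit
    have hratio : Filter.Tendsto (fun r => Real.sin (sH * r) / (sH * r))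
        (nhdsWithin (0:ℝ) (Ioi 0)) (nhds 1) := by
      have hd := Real.hasDerivAt_sin 0
      rw [hasDerivAt_iff_tendsto_slope] at hd
      have hd' : Filter.Tendsto (fun x : ℝ => Real.sin x / x) (nhdsWithin (0:ℝ) {(0:ℝ)}ᶜ)
          (nhds 1) := by
        rw [Real.cos_zero] at hd
        refine hd.congr' ?_
        filter_upwards [self_mem_nhdsWithin] with x hx
        simp [slope_def_field]
      have hmap : Filter.Tendsto (fun r : ℝ => sH * r) (nhdsWithin (0:ℝ) (Ioi 0))
          (nhdsWithin (0:ℝ) {(0:ℝ)}ᶜ) := by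
        rw [tendsto_nhdsWithin_iff]
        constructor
        · have hcm : Continuous fun r : ℝ => sH * r := continuous_const.mul continuous_id
          have := (hcm.tendsto (0:ℝ)).mono_left (nhdsWithin_le_nhds (s := Ioi (0:ℝ)))
          simpa using this
        · filter_upwards [self_mem_nhdsWithin] with r (hr : r ∈ Ioi (0:ℝ))
          simp only [mem_compl_iff, mem_singleton_iff]
          exact ne_of_gt (mul_pos hsH hr)
      exact hd'.comp hmap
    have hQlim : Filter.Tendsto (fun r => G r / s r) (nhdsWithin (0:ℝ) (Ioi 0)) (nhds 1) := by
      have h := h1.div hratio one_ne_zero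
      rw [div_one] at h
      refine h.congr' ?_
      filter_upwards [self_mem_nhdsWithin] with r (hr : r ∈ Ioi (0:ℝ))
      have hrne : r ≠ 0 := ne_of_gt hr
      rcases eq_or_ne (Real.sin (sH * r)) 0 with hz | hz
      · simp [hsdef, hz, div_eq_mul_inv]
      · rw [hsdef, Pi.div_apply]
        field_simp
    -- key lemma
    have hkey : ∀ ρ : ℝ, 0 < ρ → ρ ≤ r₀ → (∀ r ∈ Ioo (0:ℝ) ρ, 0 < G r) →
        0 ≤ W ρ ∧ s ρ ≤ G ρ := by
      intro ρ hρ0 hρr hGpos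
      have hsubρ : Ioc (0:ℝ) ρ ⊆ Ioc 0 r₀ := Ioc_subset_Ioc_right hρr
      have hGd : ∀ r ∈ Ioo (0:ℝ) ρ, HasDerivAt G (G' r) r := fun r hr =>
        (hG' r (hsubρ ⟨hr.1, hr.2.le⟩)).hasDerivAt
          (Ioc_mem_nhds hr.1 (lt_of_lt_of_le hr.2 hρr))
      have hG'd : ∀ r ∈ Ioo (0:ℝ) ρ, HasDerivAt G' (-(K r * G r)) r := fun r hr =>
        (hG'' r (hsubρ ⟨hr.1, hr.2.le⟩)).hasDerivAt
          (Ioc_mem_nhds hr.1 (lt_of_lt_of_le hr.2 hρr))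
      have hWd : ∀ r ∈ Ioo (0:ℝ) ρ, HasDerivAt W ((H - K r) * (G r * s r)) r := by
        intro r hr
        have hd := ((hG'd r hr).mul (hs_deriv r)).sub ((hGd r hr).mul (hc_deriv r))
        refine hd.congr_deriv ?_
        ring
      have hWc : ContinuousOn W (Ioc 0 ρ) :=
        ((hG'c.mono hsubρ).mul hscont.continuousOn).sub
          ((hGc.mono hsubρ).mul (show Continuous fun t : ℝ => Real.cos (sH * t) from
            Real.continuous_cos.comp (continuous_const.mul continuous_id)).continuousOn)
      have hWmono : MonotoneOn W (Ioc 0 ρ) := by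
        apply monotoneOn_of_deriv_nonneg (convex_Ioc 0 ρ) hWc
        · rw [interior_Ioc]
          exact fun r hr => ((hWd r hr).differentiableAt).differentiableWithinAt
        · rw [interior_Ioc]
          intro r hr
          rw [(hWd r hr).deriv]
          have hKr := abs_le.1 (hKb r (hsubρ ⟨hr.1, hr.2.le⟩))
          have hGr := hGpos r hr
          have hsr := hs_pos r (hsubρ ⟨hr.1, hr.2.le⟩)
          have : 0 ≤ H - K r := by linarith
          positivity
      have hWnonneg : ∀ r ∈ Ioc (0:ℝ) ρ, 0 ≤ W r := by
        intro r hr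
        refine le_of_tendsto hWlim ?_
        filter_upwards [Ioo_mem_nhdsGT_of_mem (⟨le_refl _, hr.1⟩ : (0:ℝ) ∈ Ico 0 r)] with a ha
        exact hWmono ⟨ha.1, le_trans ha.2.le hr.2⟩ hr ha.2.le
      have hQd : ∀ r ∈ Ioo (0:ℝ) ρ, HasDerivAt (fun t => G t / s t) (W r / (s r) ^ 2) r := by
        intro r hr
        have hsne : s r ≠ 0 := ne_of_gt (hs_pos r (hsubρ ⟨hr.1, hr.2.le⟩))
        have hd := (hGd r hr).div (hs_deriv r) hsne
        refine hd.congr_deriv ?_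
        all_goals simp [hWdef, sq]
      have hQc : ContinuousOn (fun t => G t / s t) (Ioc 0 ρ) :=
        (hGc.mono hsubρ).div hscont.continuousOn (fun x hx => ne_of_gt (hs_pos x (hsubρ hx)))
      have hQmono : MonotoneOn (fun t => G t / s t) (Ioc 0 ρ) := by
        apply monotoneOn_of_deriv_nonneg (convex_Ioc 0 ρ) hQc
        · rw [interior_Ioc]
          exact fun r hr => ((hQd r hr).differentiableAt).differentiableWithinAt
        · rw [interior_Ioc]
          intro r hr
          rw [(hQd r hr).deriv]
          exact div_nonneg (hWnonneg r ⟨hr.1, hr.2.le⟩) (sq_nonneg _)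
      have hQge : (1:ℝ) ≤ G ρ / s ρ := by
        refine le_of_tendsto hQlim ?_
        filter_upwards [Ioo_mem_nhdsGT_of_mem (⟨le_refl _, hρ0⟩ : (0:ℝ) ∈ Ico 0 ρ)] with a ha
        exact hQmono ⟨ha.1, ha.2.le⟩ ⟨hρ0, le_refl _⟩ ha.2.le
      have hsρ : 0 < s ρ := hs_pos ρ (hsubρ ⟨hρ0, le_refl _⟩)
      exact ⟨hWnonneg ρ ⟨hρ0, le_refl _⟩, (one_le_div hsρ).1 hQge⟩
    -- positivity near 0
    obtain ⟨δ, hδpos, hδ⟩ : ∃ δ > 0, ∀ r ∈ Ioo (0:ℝ) δ, 0 < G r := by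
      have h := h1.eventually (lt_mem_nhds (show (1:ℝ)/2 < 1 by norm_num))
      rw [eventually_nhdsWithin_iff, Metric.eventually_nhds_iff] at h
      obtain ⟨ε, hε, h⟩ := h
      refine ⟨ε, hε, fun r hr => ?_⟩
      have hr2 := h (show dist r 0 < ε by simpa [Real.dist_eq, abs_of_pos hr.1] using hr.2) hr.1
      have : 0 < G r / r := by linarith
      have := mul_pos this hr.1
      rwa [div_mul_cancel₀] at this
      exact ne_of_gt hr.1
    -- global positivity
    have hpos : ∀ r ∈ Ioo (0:ℝ) r₀, 0 < G r := by
      by_contra hcon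
      push_neg at hcon
      obtain ⟨r₁, hr₁, hGr₁⟩ := hcon
      set B : Set ℝ := {x | x ∈ Ioc (0:ℝ) r₀ ∧ G x ≤ 0} with hBdef
      have hBne : B.Nonempty := ⟨r₁, ⟨hr₁.1, hr₁.2.le⟩, hGr₁⟩
      have hBbdd : BddBelow B := ⟨0, fun x hx => hx.1.1.le⟩
      set ρ := sInf B with hρdef
      have hρδ : ∀ x ∈ B, δ ≤ x := by
        intro x hx
        by_contra hxδ
        push_neg at hxδ
        exact absurd (hδ x ⟨hx.1.1, hxδ⟩) (not_lt.2 hx.2)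
      have hρ0 : 0 < ρ := lt_of_lt_of_le hδpos (le_csInf hBne hρδ)
      have hρr : ρ ≤ r₀ := csInf_le hBbdd ⟨⟨hr₁.1, hr₁.2.le⟩, hGr₁⟩ |>.trans hr₁.2.le
      have hGρpos : ∀ r ∈ Ioo (0:ℝ) ρ, 0 < G r := by
        intro r hr
        by_contra hGr
        push_neg at hGr
        have : r ∈ B := ⟨⟨hr.1, le_trans hr.2.le hρr⟩, hGr⟩
        exact absurd (csInf_le hBbdd this) (not_le.2 hr.2)
      obtain ⟨-, hsG⟩ := hkey ρ hρ0 hρr hGρpos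
      have hsρ : 0 < s ρ := hs_pos ρ ⟨hρ0, hρr⟩
      -- G ρ ≤ 0 from sequence in B
      obtain ⟨u, -, hu, huB⟩ := exists_seq_tendsto_sInf hBne hBbdd
      have hGρle : G ρ ≤ 0 := by
        have hcts : Filter.Tendsto (G ∘ u) Filter.atTop (nhds (G ρ)) := by
          apply ((hGc ρ ⟨hρ0, hρr⟩).tendsto).comp
          exact tendsto_nhdsWithin_iff.2 ⟨hu, Filter.Eventually.of_forall fun n => (huB n).1⟩
        exact le_of_tendsto hcts (Filter.Eventually.of_forall fun n => (huB n).2)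
      linarith
    -- conclusion
    obtain ⟨hW₀, hsG₀⟩ := hkey r₀ hr₀ (le_refl _) hpos
    have hsρ : 0 < s r₀ := hs_pos r₀ ⟨hr₀, le_refl _⟩
    have hcρ : 0 ≤ Real.cos (sH * r₀) := hcos_nonneg r₀ ⟨hr₀, le_refl _⟩
    have h2 : G r₀ * Real.cos (sH * r₀) ≥ s r₀ * Real.cos (sH * r₀) :=
      mul_le_mul_of_nonneg_right hsG₀ hcρ
    have h3 : s r₀ * Real.cos (sH * r₀) ≤ G' r₀ * s r₀ := by
      have h5 : 0 ≤ G' r₀ * s r₀ - G r₀ * Real.cos (sH * r₀) := hW₀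
      linarith
    have h4 : Real.cos (sH * r₀) * s r₀ ≤ G' r₀ * s r₀ := by
      rw [mul_comm]; exact h3
    exact le_of_mul_le_mul_right h4 hsρ
  exact ⟨hMain, hIdent, by rw [hIdent]; linarith⟩
end
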